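/- arXiv:1801.00313 — 4 statements merged into one kernel-verified Lean document; each statement's English description precedes it below -/
import Mathlib

section
/- Let T be a finite tree rooted at r with nonnegative node weights c, and let ε > 0 with total constraint OPT ≥ c(V(T)) playing the role of an upper bound parameter. Then there exists a set W ⊆ V(T) of size at most 1/ε such that for every node z of T there exists a node u ∈ W ∪ {r} and a path P in T from z to u with c(V(P) \ {u}) ≤ ε·OPT. -/
open Finset

open scoped Classical

section Aux

variable {V : Type*} [Fintype V] [DecidableEq V]

/-- clip a value: keep it if at most `t`, else `0`. -/
noncomputable def clipR (t x : ℝ) : ℝ := if x ≤ t then x else 0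

lemma clipR_nonneg {t x : ℝ} (hx : 0 ≤ x) : 0 ≤ clipR t x := by
  unfold clipR; split <;> simp [hx]

/-- The residual weight of a vertex in a rooted forest given by parent map `p`. -/
noncomputable def skelRes (r : V) (p : V → V) (d : V → ℕ)
    (hd : ∀ w, w ≠ r → d w = d (p w) + 1) (hbd : ∀ v, d v < Fintype.card V)
    (c : V → ℝ) (t : ℝ) (v : V) : ℝ :=
  c v + ∑ w ∈ (Finset.univ.filter (fun w => p w = v ∧ w ≠ r)).attach,
      clipR t (skelRes r p d hd hbd c t w.1)
termination_by Fintype.card V - d v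
decreasing_by
  have hw := (Finset.mem_filter.mp w.2).2
  have h1 := hd w.1 hw.2
  rw [hw.1] at h1
  have h2 := hbd w.1
  omega

variable (r : V) (p : V → V) (d : V → ℕ)
  (hd : ∀ w, w ≠ r → d w = d (p w) + 1) (hbd : ∀ v, d v < Fintype.card V)
  (c : V → ℝ) (t : ℝ)

lemma skelRes_eq (v : V) :
    skelRes r p d hd hbd c t v
      = c v + ∑ w ∈ Finset.univ.filter (fun w => p w = v ∧ w ≠ r),
          clipR t (skelRes r p d hd hbd c t w) := by
  rw [skelRes]
  exact congrArg _ (Finset.sum_attach _ fun w => clipR t (skelRes r p d hd hbd c t w))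

lemma skelRes_nonneg (hc : ∀ v, 0 ≤ c v) (v : V) : 0 ≤ skelRes r p d hd hbd c t v := by
  rw [skelRes]
  exact add_nonneg (hc v) (Finset.sum_nonneg fun w _ =>
    clipR_nonneg (skelRes_nonneg hc w.1))
termination_by Fintype.card V - d v
decreasing_by
  have hw := (Finset.mem_filter.mp w.2).2
  have h1 := hd w.1 hw.2
  rw [hw.1] at h1
  have h2 := hbd w.1
  omega

lemma c_le_skelRes (hc : ∀ v, 0 ≤ c v) (v : V) : c v ≤ skelRes r p d hd hbd c t v := by
  rw [skelRes_eq]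
  have : (0:ℝ) ≤ ∑ w ∈ Finset.univ.filter (fun w => p w = v ∧ w ≠ r),
      clipR t (skelRes r p d hd hbd c t w) :=
    Finset.sum_nonneg fun w _ => clipR_nonneg (skelRes_nonneg r p d hd hbd c t hc w)
  linarith

lemma skelRes_step (hc : ∀ v, 0 ≤ c v) {w : V} (hw : w ≠ r)
    (hle : skelRes r p d hd hbd c t w ≤ t) :
    skelRes r p d hd hbd c t w + c (p w) ≤ skelRes r p d hd hbd c t (p w) := by
  rw [skelRes_eq r p d hd hbd c t (p w)]
  have hmem : w ∈ Finset.univ.filter (fun x => p x = p w ∧ x ≠ r) := by simp [hw]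
  have h1 : clipR t (skelRes r p d hd hbd c t w) = skelRes r p d hd hbd c t w := if_pos hle
  have h2 : skelRes r p d hd hbd c t w
      ≤ ∑ x ∈ Finset.univ.filter (fun x => p x = p w ∧ x ≠ r),
          clipR t (skelRes r p d hd hbd c t x) := by
    rw [← h1]
    exact Finset.single_le_sum
      (fun x _ => clipR_nonneg (skelRes_nonneg r p d hd hbd c t hc x)) hmem
  linarith

include hd in
lemma depth_iter (x : V) : ∀ j, (∀ i < j, p^[i] x ≠ r) → d (p^[j] x) + j = d x := by
  intro j
  induction j with
  | zero => intro _; simp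
  | succ k ih =>
    intro h
    have hk : p^[k] x ≠ r := h k (by omega)
    have h1 := hd _ hk
    have he : p (p^[k] x) = p^[k+1] x := (Function.iterate_succ_apply' p k x).symm
    rw [he] at h1
    have h2 := ih (fun i hi => h i (by omega))
    omega

include hd in
lemma reach_root (x : V) : ∃ i, p^[i] x = r := by
  by_cases hx : x = r
  · exact ⟨0, hx⟩
  · obtain ⟨i, hi⟩ := reach_root (p x)
    exact ⟨i + 1, by rw [Function.iterate_succ_apply]; exact hi⟩
termination_by d x
decreasing_by
  have := hd x hx
  omega

lemma chain_sum_le (hc : ∀ v, 0 ≤ c v) (x : V) (k : ℕ)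
    (h : ∀ i ≤ k, ¬ t < skelRes r p d hd hbd c t (p^[i] x) ∧ p^[i] x ≠ r) :
    ∑ i ∈ Finset.range (k+1), c (p^[i] x) ≤ skelRes r p d hd hbd c t (p^[k] x) := by
  induction k with
  | zero => simpa using c_le_skelRes r p d hd hbd c t hc x
  | succ k ih =>
    rw [Finset.sum_range_succ]
    have h1 := ih (fun i hi => h i (by omega))
    have h2 := skelRes_step r p d hd hbd c t hc (h k (by omega)).2
      (not_lt.mp (h k (by omega)).1)
    have he : p (p^[k] x) = p^[k+1] x := (Function.iterate_succ_apply' p k x).symm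
    rw [he] at h2
    linarith

/-- The "cluster" of vertices hanging below `u` through unmarked vertices. -/
noncomputable def DuSet (u : V) : Finset V :=
  Finset.univ.filter (fun x => ∃ j, p^[j] x = u ∧
    ∀ i < j, ¬ t < skelRes r p d hd hbd c t (p^[i] x) ∧ p^[i] x ≠ r)

lemma mem_DuSet {u x : V} :
    x ∈ DuSet r p d hd hbd c t u ↔ ∃ j, p^[j] x = u ∧
      ∀ i < j, ¬ t < skelRes r p d hd hbd c t (p^[i] x) ∧ p^[i] x ≠ r := by
  simp [DuSet]

lemma depth_le_of_mem_DuSet {u x : V} (hx : x ∈ DuSet r p d hd hbd c t u) :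
    d u ≤ d x := by
  obtain ⟨j, hj, hpre⟩ := (mem_DuSet r p d hd hbd c t).mp hx
  have h := depth_iter r p d hd x j (fun i hi => (hpre i hi).2)
  rw [hj] at h
  omega

lemma skelRes_le_sum_DuSet (hc : ∀ v, 0 ≤ c v) (u : V) :
    skelRes r p d hd hbd c t u ≤ ∑ x ∈ DuSet r p d hd hbd c t u, c x := by
  classical
  set Ch : Finset V := Finset.univ.filter (fun w => p w = u ∧ w ≠ r) with hCh
  set Ch' : Finset V := Ch.filter (fun w => skelRes r p d hd hbd c t w ≤ t) with hCh'
  have hchild : ∀ w ∈ Ch', p w = u ∧ w ≠ r ∧ skelRes r p d hd hbd c t w ≤ t := by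
    intro w hw
    rw [hCh', Finset.mem_filter, hCh, Finset.mem_filter] at hw
    exact ⟨hw.1.2.1, hw.1.2.2, hw.2⟩
  have hdepth : ∀ w ∈ Ch', d w = d u + 1 := by
    intro w hw
    obtain ⟨h1, h2, _⟩ := hchild w hw
    have := hd w h2
    rw [h1] at this
    exact this
  have e1 := skelRes_eq r p d hd hbd c t u
  have e2 : ∑ w ∈ Ch', skelRes r p d hd hbd c t w
      = ∑ w ∈ Ch, clipR t (skelRes r p d hd hbd c t w) := by
    rw [hCh', Finset.sum_filter]
    apply Finset.sum_congr rfl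
    intro x _
    by_cases hx : skelRes r p d hd hbd c t x ≤ t <;> simp [clipR, hx]
  -- IH on children
  have key : ∀ w ∈ Ch', skelRes r p d hd hbd c t w ≤ ∑ x ∈ DuSet r p d hd hbd c t w, c x := by
    intro w hw
    have hdw := hdepth w hw
    have hbw := hbd w
    exact skelRes_le_sum_DuSet hc w
  -- disjointness of children clusters
  have hdisj : (Ch' : Set V).PairwiseDisjoint (DuSet r p d hd hbd c t) := by
    intro w1 hw1 w2 hw2 hne
    refine Finset.disjoint_left.mpr ?_
    intro x hx1 hx2
    obtain ⟨j1, hj1, hp1⟩ := (mem_DuSet r p d hd hbd c t).mp hx1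
    obtain ⟨j2, hj2, hp2⟩ := (mem_DuSet r p d hd hbd c t).mp hx2
    have d1 := depth_iter r p d hd x j1 (fun i hi => (hp1 i hi).2)
    have d2 := depth_iter r p d hd x j2 (fun i hi => (hp2 i hi).2)
    have e1 := hdepth w1 (by simpa using hw1)
    have e2 := hdepth w2 (by simpa using hw2)
    rw [hj1] at d1
    rw [hj2] at d2
    have : j1 = j2 := by omega
    apply hne
    rw [← hj1, ← hj2, this]
  have husub : ∀ w ∈ Ch', DuSet r p d hd hbd c t w ⊆ DuSet r p d hd hbd c t u := by
    intro w hw x hx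
    obtain ⟨h1, h2, h3⟩ := hchild w hw
    obtain ⟨j, hj, hpre⟩ := (mem_DuSet r p d hd hbd c t).mp hx
    refine (mem_DuSet r p d hd hbd c t).mpr ⟨j + 1, ?_, ?_⟩
    · rw [Function.iterate_succ_apply', hj, h1]
    · intro i hi
      rcases Nat.lt_succ_iff_lt_or_eq.mp hi with hi' | hi'
      · exact hpre i hi'
      · subst hi'
        rw [hj]
        exact ⟨not_lt.mpr h3, h2⟩
  have hunotin : u ∉ Ch'.biUnion (DuSet r p d hd hbd c t) := by
    intro hu
    obtain ⟨w, hw, hmem⟩ := Finset.mem_biUnion.mp hu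
    have h1 := depth_le_of_mem_DuSet r p d hd hbd c t hmem
    have h2 := hdepth w hw
    omega
  calc skelRes r p d hd hbd c t u
      = c u + ∑ w ∈ Ch', skelRes r p d hd hbd c t w := by rw [e1, e2]
    _ ≤ c u + ∑ w ∈ Ch', ∑ x ∈ DuSet r p d hd hbd c t w, c x :=
        add_le_add_right (Finset.sum_le_sum key) _
    _ = c u + ∑ x ∈ Ch'.biUnion (DuSet r p d hd hbd c t), c x := by
        rw [Finset.sum_biUnion hdisj]
    _ = ∑ x ∈ insert u (Ch'.biUnion (DuSet r p d hd hbd c t)), c x := by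
        rw [Finset.sum_insert hunotin]
    _ ≤ ∑ x ∈ DuSet r p d hd hbd c t u, c x := by
        apply Finset.sum_le_sum_of_subset_of_nonneg
        · intro x hx
          rcases Finset.mem_insert.mp hx with h | h
          · subst h
            exact (mem_DuSet r p d hd hbd c t).mpr ⟨0, rfl, by omega⟩
          · obtain ⟨w, hw, hmem⟩ := Finset.mem_biUnion.mp h
            exact husub w hw hmem
        · intro x _ _
          exact hc x
termination_by Fintype.card V - d u
decreasing_by
  have := hbd w
  omega

lemma DuSet_disjoint_marked {u1 u2 : V} (h1 : t < skelRes r p d hd hbd c t u1)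
    (h2 : t < skelRes r p d hd hbd c t u2) (hne : u1 ≠ u2) :
    Disjoint (DuSet r p d hd hbd c t u1) (DuSet r p d hd hbd c t u2) := by
  refine Finset.disjoint_left.mpr ?_
  intro x hx1 hx2
  obtain ⟨j1, hj1, hp1⟩ := (mem_DuSet r p d hd hbd c t).mp hx1
  obtain ⟨j2, hj2, hp2⟩ := (mem_DuSet r p d hd hbd c t).mp hx2
  rcases lt_trichotomy j1 j2 with h | h | h
  · exact (hp2 j1 h).1 (by rw [hj1]; exact h1)
  · exact hne (by rw [← hj1, ← hj2, h])
  · exact (hp1 j2 h).1 (by rw [hj2]; exact h2)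

lemma exists_walk_iter (G : SimpleGraph V) (hadj : ∀ v, v ≠ r → G.Adj v (p v)) :
    ∀ (k : ℕ) (x : V), (∀ i < k, p^[i] x ≠ r) →
      ∃ P : G.Walk x (p^[k] x), P.support = (List.range (k+1)).map (fun i => p^[i] x) := by
  intro k
  induction k with
  | zero => intro x _; exact ⟨SimpleGraph.Walk.nil, by simp⟩
  | succ k ih =>
    intro x h
    have hx : x ≠ r := by simpa using h 0 (Nat.succ_pos k)
    obtain ⟨P, hP⟩ := ih (p x) (fun i hi => by
      rw [← Function.iterate_succ_apply]
      exact h (i+1) (by omega))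
    refine ⟨SimpleGraph.Walk.cons (hadj x hx) P, ?_⟩
    change x :: P.support = _
    rw [hP]
    have heq : List.map (fun i => p^[i] x) (List.range (k+1+1))
        = x :: List.map (fun i => p^[i] (p x)) (List.range (k+1)) := by
      rw [List.range_succ_eq_map, List.map_cons, List.map_map]
      have hfun : ((fun i => p^[i] x) ∘ Nat.succ) = fun i => p^[i] (p x) :=
        funext fun i => Function.iterate_succ_apply p i x
      rw [hfun]
      simp
    rw [heq]

end Aux

/-- Existence of an ε-skeleton: in a finite tree `G` rooted at `r` with nonnegative
node weights `c` of total weight at most `OPT`, there is a set `W` of at most `1/ε`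
vertices such that every vertex `z` has a path in `G` to some `u ∈ W ∪ {r}` whose
node weight, excluding the weight of `u`, is at most `ε·OPT`. -/
theorem exists_eps_skeleton {V : Type*} [Fintype V] [DecidableEq V]
    (G : SimpleGraph V) (hT : G.IsTree) (r : V)
    (c : V → ℝ) (hc : ∀ v, 0 ≤ c v)
    (OPT ε : ℝ) (hε : 0 < ε) (hOPT : ∑ v, c v ≤ OPT) :
    ∃ W : Finset V, (W.card : ℝ) ≤ 1/ε ∧
      ∀ z : V, ∃ u : V, (u ∈ W ∨ u = r) ∧ ∃ P : G.Walk z u, P.IsPath ∧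
        ∑ v ∈ P.support.toFinset.erase u, c v ≤ ε * OPT := by
  classical
  have hconn : G.Connected := hT.isConnected
  have hOPT0 : 0 ≤ OPT := le_trans (Finset.sum_nonneg fun v _ => hc v) hOPT
  -- construct the parent map
  have hpar : ∀ v : V, v ≠ r → ∃ w, G.Adj v w ∧ G.dist r v = G.dist r w + 1 := by
    intro v hv
    obtain ⟨Q, hQ⟩ := hconn.exists_walk_length_eq_dist v r
    have hnn : ¬ Q.Nil := SimpleGraph.Walk.not_nil_of_ne hv
    refine ⟨Q.getVert 1, Q.adj_snd hnn, ?_⟩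
    have htl : Q.tail.length + 1 = Q.length := SimpleGraph.Walk.length_tail_add_one hnn
    have hle1 : G.dist r (Q.getVert 1) ≤ Q.tail.length := by
      have := SimpleGraph.dist_le Q.tail.reverse
      simpa using this
    have hle2 : G.dist r v ≤ G.dist r (Q.getVert 1) + 1 := by
      obtain ⟨D, hD⟩ := hconn.exists_walk_length_eq_dist r (Q.getVert 1)
      have := SimpleGraph.dist_le (D.concat (Q.adj_snd hnn).symm)
      rw [SimpleGraph.Walk.length_concat, hD] at this
      exact this
    have hcomm : G.dist r v = G.dist v r := SimpleGraph.dist_comm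
    omega
  set p : V → V := fun v => if h : v = r then r else Classical.choose (hpar v h) with hp
  have hadj : ∀ v, v ≠ r → G.Adj v (p v) := by
    intro v hv
    rw [hp]
    simp only [dif_neg hv]
    exact (Classical.choose_spec (hpar v hv)).1
  set d : V → ℕ := fun v => G.dist r v with hdd
  have hd : ∀ w, w ≠ r → d w = d (p w) + 1 := by
    intro w hw
    rw [hp]
    simp only [dif_neg hw]
    exact (Classical.choose_spec (hpar w hw)).2
  have hbd : ∀ v, d v < Fintype.card V := by
    intro v
    obtain ⟨Q, hQ⟩ := hconn.exists_walk_length_eq_dist r v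
    have h1 : G.dist r v ≤ Q.toPath.1.length := SimpleGraph.dist_le _
    have h2 : Q.toPath.1.length < Fintype.card V := Q.toPath.2.length_lt
    show G.dist r v < Fintype.card V
    omega
  set t : ℝ := ε * OPT with ht
  set R : V → ℝ := skelRes r p d hd hbd c t with hR
  set W : Finset V := Finset.univ.filter (fun u => t < R u) with hW
  have hmarked : ∀ u ∈ W, t < R u := by
    intro u hu
    rw [hW, Finset.mem_filter] at hu
    exact hu.2
  refine ⟨W, ?_, ?_⟩
  · -- cardinality bound
    have hsum2 : ∑ u ∈ W, R u ≤ ∑ u ∈ W, ∑ x ∈ DuSet r p d hd hbd c t u, c x :=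
      Finset.sum_le_sum fun u _ => skelRes_le_sum_DuSet r p d hd hbd c t hc u
    have hdisjW : (W : Set V).PairwiseDisjoint (DuSet r p d hd hbd c t) := by
      intro u1 hu1 u2 hu2 hne
      exact DuSet_disjoint_marked r p d hd hbd c t
        (hmarked u1 (by simpa using hu1)) (hmarked u2 (by simpa using hu2)) hne
    have hsum3 : ∑ u ∈ W, ∑ x ∈ DuSet r p d hd hbd c t u, c x ≤ ∑ v, c v := by
      rw [← Finset.sum_biUnion hdisjW]
      exact Finset.sum_le_sum_of_subset_of_nonneg (Finset.subset_univ _)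
        (fun x _ _ => hc x)
    have hsum1 : t * W.card ≤ ∑ u ∈ W, R u := by
      have : ∑ u ∈ W, t ≤ ∑ u ∈ W, R u :=
        Finset.sum_le_sum fun u hu => le_of_lt (hmarked u hu)
      rw [Finset.sum_const, nsmul_eq_mul] at this
      linarith [this]
    have htotal : t * W.card ≤ OPT := by linarith
    rcases eq_or_lt_of_le hOPT0 with h0 | h0
    · -- OPT = 0 : W is empty
      have hWempty : W = ∅ := by
        by_contra hne
        obtain ⟨u, hu⟩ := Finset.nonempty_of_ne_empty hne
        have h1 := hmarked u hu
        have h2 := skelRes_le_sum_DuSet r p d hd hbd c t hc u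
        have h3 : ∑ x ∈ DuSet r p d hd hbd c t u, c x ≤ ∑ v, c v :=
          Finset.sum_le_sum_of_subset_of_nonneg (Finset.subset_univ _)
            (fun x _ _ => hc x)
        have h4 : ∑ v, c v ≤ 0 := by rw [← h0] at hOPT; exact hOPT
        have ht0 : t = 0 := by rw [ht, ← h0, mul_zero]
        have h5 : R u = skelRes r p d hd hbd c t u := rfl
        linarith [h1, h2, h3, h4, ht0, h5]
      rw [hWempty]
      simp
      positivity
    · -- OPT > 0
      rw [ht] at htotal
      have h1 : (W.card : ℝ) * ε ≤ 1 := by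
        have h2 : (ε * (W.card : ℝ)) * OPT ≤ 1 * OPT := by ring_nf; ring_nf at htotal; linarith
        have := le_of_mul_le_mul_right h2 h0
        linarith
      rw [le_div_iff₀ hε]
      linarith
  · -- coverage
    intro z
    have hreach : ∃ i, t < R (p^[i] z) ∨ p^[i] z = r := by
      obtain ⟨i, hi⟩ := reach_root r p d hd z
      exact ⟨i, Or.inr hi⟩
    set k := Nat.find hreach with hk
    have hspec := Nat.find_spec hreach
    have hmin : ∀ i < k, ¬ t < R (p^[i] z) ∧ p^[i] z ≠ r := by
      intro i hi
      have h := Nat.find_min hreach hi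
      rw [not_or] at h
      exact h
    obtain ⟨P, hsup⟩ := exists_walk_iter r p G hadj k z (fun i hi => (hmin i hi).2)
    have hinj : ∀ i ∈ Finset.range (k+1), ∀ j ∈ Finset.range (k+1),
        p^[i] z = p^[j] z → i = j := by
      intro i hi j hj hij
      rw [Finset.mem_range] at hi hj
      have d1 := depth_iter r p d hd z i (fun i' hi' => (hmin i' (by omega)).2)
      have d2 := depth_iter r p d hd z j (fun j' hj' => (hmin j' (by omega)).2)
      rw [hij] at d1
      omega
    refine ⟨p^[k] z, ?_, P, ?_, ?_⟩
    · rcases hspec with h | h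
      · exact Or.inl (by rw [hW]; simp [h]; exact h)
      · exact Or.inr h
    · rw [SimpleGraph.Walk.isPath_def, hsup]
      apply List.Nodup.map_on _ List.nodup_range
      intro i hi j hj hij
      exact hinj i (by simpa using hi) j (by simpa using hj) hij
    · -- sum bound
      have htf : P.support.toFinset = (Finset.range (k+1)).image (fun i => p^[i] z) := by
        ext v
        simp only [List.mem_toFinset, hsup, List.mem_map, List.mem_range,
          Finset.mem_image, Finset.mem_range]
      have himg : (Finset.range (k+1)).image (fun i => p^[i] z)
          = insert (p^[k] z) ((Finset.range k).image (fun i => p^[i] z)) := by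
        rw [Finset.range_add_one, Finset.image_insert]
      have hnotin : p^[k] z ∉ (Finset.range k).image (fun i => p^[i] z) := by
        intro hmem
        obtain ⟨i, hi, hie⟩ := Finset.mem_image.mp hmem
        rw [Finset.mem_range] at hi
        have := hinj i (by simp; omega) k (by simp) hie
        omega
      have herase : P.support.toFinset.erase (p^[k] z)
          = (Finset.range k).image (fun i => p^[i] z) := by
        rw [htf, himg, Finset.erase_insert hnotin]
      rw [herase]
      have hsumimg : ∑ v ∈ (Finset.range k).image (fun i => p^[i] z), c v
          = ∑ i ∈ Finset.range k, c (p^[i] z) := by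
        apply Finset.sum_image
        intro i hi j hj hij
        rw [Finset.mem_coe, Finset.mem_range] at hi hj
        exact hinj i (by simp; omega) j (by simp; omega) hij
      rw [hsumimg]
      rcases Nat.eq_zero_or_pos k with h0 | h0
      · rw [h0]
        simp
        positivity
      · obtain ⟨m, hm⟩ : ∃ m, k = m + 1 := ⟨k - 1, by omega⟩
        have hchain := chain_sum_le r p d hd hbd c t hc z m
          (fun i hi => hmin i (by omega))
        have hlast : R (p^[m] z) ≤ t := not_lt.mp (hmin m (by omega)).1
        rw [hR] at hlast
        rw [hm]
        calc ∑ i ∈ Finset.range (m+1), c (p^[i] z)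
            ≤ skelRes r p d hd hbd c t (p^[m] z) := hchain
          _ ≤ t := hlast
          _ = ε * OPT := ht.symm ▸ rfl
end

section
/- Let OPT > 0, λ₁ ≤ λ₂ be reals with λ₂ - λ₁ ≤ ε·OPT/(3n), and let T₁, T₂ be trees with |T₁| < k < |T₂| ≤ n. Suppose dual values DS₁, DS₂ ≥ 0 satisfy c(T_i) + 3λ_i(n - |T_i|) ≤ 3·DS_i for i = 1,2, and that α₁·DS₁ + α₂·DS₂ - λ₂(n-k) ≤ OPT where α₁ = (|T₂|-k)/(|T₂|-|T₁|) and α₂ = (k-|T₁|)/(|T₂|-|T₁|). Then α₁·c(T₁) + α₂·c(T₂) ≤ (3+ε)·OPT. -/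
/-- Convex combination bound of the Lagrangian relaxation framework with LMP factor 3:
if `λ₂ - λ₁ ≤ ε·OPT/(3n)`, the trees satisfy `c(Tᵢ) + 3λᵢ(n - |Tᵢ|) ≤ 3·DSᵢ`, and the
combined dual is feasible, `α₁·DS₁ + α₂·DS₂ - λ₂(n-k) ≤ OPT`, then
`α₁·c(T₁) + α₂·c(T₂) ≤ (3+ε)·OPT`. -/
theorem convex_combination_bound
    (OPT ε lam1 lam2 n k t1 t2 c1 c2 DS1 DS2 a1 a2 : ℝ)
    (hOPT : 0 < OPT) (hε : 0 ≤ ε) (hlam : lam1 ≤ lam2)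
    (hgap : lam2 - lam1 ≤ ε * OPT / (3 * n))
    (ht0 : 0 ≤ t1) (h1 : t1 < k) (h2 : k < t2) (h3 : t2 ≤ n) (hn : 0 < n)
    (hDS1 : 0 ≤ DS1) (hDS2 : 0 ≤ DS2)
    (ha1 : a1 = (t2 - k) / (t2 - t1)) (ha2 : a2 = (k - t1) / (t2 - t1))
    (hLMP1 : c1 + 3 * lam1 * (n - t1) ≤ 3 * DS1)
    (hLMP2 : c2 + 3 * lam2 * (n - t2) ≤ 3 * DS2)
    (hdual : a1 * DS1 + a2 * DS2 - lam2 * (n - k) ≤ OPT) :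
    a1 * c1 + a2 * c2 ≤ (3 + ε) * OPT := by
  have hd : 0 < t2 - t1 := by linarith
  have ha1n : 0 ≤ a1 := by
    rw [ha1]; apply div_nonneg <;> linarith
  have ha2n : 0 ≤ a2 := by
    rw [ha2]; apply div_nonneg <;> linarith
  have ha1le : a1 ≤ 1 := by
    rw [ha1, div_le_one hd]; linarith
  have hsum : a1 + a2 = 1 := by
    rw [ha1, ha2]; field_simp; ring
  have hk : a1 * t1 + a2 * t2 = k := by
    rw [ha1, ha2]; field_simp; ring
  have hgap' : (lam2 - lam1) * n ≤ ε * OPT / 3 := by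
    have h := mul_le_mul_of_nonneg_right hgap hn.le
    have heq : ε * OPT / (3 * n) * n = ε * OPT / 3 := by
      field_simp
    linarith [heq ▸ h]
  have hlg : 0 ≤ lam2 - lam1 := by linarith
  have hnt : 0 ≤ n - t1 := by linarith
  have hB : a1 * (lam2 - lam1) * (n - t1) ≤ (lam2 - lam1) * n := by
    nlinarith [mul_nonneg (mul_nonneg hlg (sub_nonneg.mpr ha1le)) hnt,
      mul_nonneg hlg ht0]
  have e1 := mul_le_mul_of_nonneg_left hLMP1 ha1n
  have e2 := mul_le_mul_of_nonneg_left hLMP2 ha2n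
  have key : a1 * c1 + a2 * c2 ≤
      3 * (a1 * DS1 + a2 * DS2) - 3 * lam2 * (n - k)
        + 3 * (a1 * (lam2 - lam1) * (n - t1)) := by
    have id1 : 3 * lam2 * (n - k) =
        3 * (a1 * lam2 * (n - t1) + a2 * lam2 * (n - t2)) := by
      linear_combination (3 * lam2) * hk - (3 * lam2 * n) * hsum
    nlinarith [e1, e2, id1]
  linarith [key, hdual, hB, hgap']
end

section
/- Let OPT > 0, α = α₂ ∈ (0,1), β = c(T₁)/OPT ∈ [0,3], ε, ε₂ > 0, and suppose (1-α)·c(T₁) + α·c(T₂) ≤ (3+ε)·OPT. Define SOL₁-cost = c(T₁) + (1+ε₂)·α·c(T₂) + ε·C·log(1/ε₂)·OPT for some constant C, and SOL₂-cost = c(T₂). Then min(SOL₁-cost, SOL₂-cost) ≤ max over α ∈ (0,1), β ∈ [0,3] of min{ 3(1+ε₂+ε) + αβ + ε·C·log(1/ε₂), (3(1+ε) - (1-α)β)/α }·OPT. In particular, taking ε₂ = ε, this is (4 + O(√ε + ε·log(1/ε)))·OPT = (4 + O(√ε))·OPT for ε ≤ 1. -/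
set_option maxHeartbeats 1000000 in
/-- Cheaper of the two solutions: with `α ∈ (0,1)`, `β = c(T₁)/OPT ∈ [0,3]`,
`(1-α)c(T₁) + α·c(T₂) ≤ (3+ε)OPT`, and taking `ε₂ = ε`, the cheaper of
`SOL₁ = c(T₁) + (1+ε₂)·α·c(T₂) + ε·C·log(1/ε₂)·OPT` and `SOL₂ = c(T₂)` costs at
most `(4 + O(√ε + ε·log(1/ε)))·OPT`, which is `(4 + O(√ε))·OPT` for `ε ≤ 1`. -/
theorem cheaper_solution_bound :
    ∀ C : ℝ, 0 ≤ C → ∃ C' : ℝ, 0 < C' ∧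
      ∀ OPT c1 c2 α ε : ℝ, 0 < OPT → 0 < α → α < 1 →
        0 ≤ c1 → c1 ≤ 3 * OPT → 0 ≤ c2 → 0 < ε → ε ≤ 1 →
        (1 - α) * c1 + α * c2 ≤ (3 + ε) * OPT →
        min (c1 + (1 + ε) * α * c2 + ε * C * Real.log (1 / ε) * OPT) c2
          ≤ (4 + C' * (Real.sqrt ε + ε * Real.log (1 / ε))) * OPT ∧
        min (c1 + (1 + ε) * α * c2 + ε * C * Real.log (1 / ε) * OPT) c2
          ≤ (4 + C' * Real.sqrt ε) * OPT := by
  intro C hC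
  refine ⟨10 * C + 100, by positivity, ?_⟩
  intro OPT c1 c2 α ε hOPT hα0 hα1 hc10 hc13 hc20 hε0 hε1 hcon
  set s := Real.sqrt ε with hs
  set L := Real.log (1 / ε) with hLdef
  have hs0 : 0 < s := Real.sqrt_pos.mpr hε0
  have hss : s * s = ε := Real.mul_self_sqrt hε0.le
  have hs1 : s ≤ 1 := by
    rw [hs, show (1 : ℝ) = Real.sqrt 1 by simp]
    exact Real.sqrt_le_sqrt hε1
  have hεs : ε ≤ s := by nlinarith
  have hL0 : 0 ≤ L := by
    rw [hLdef]
    apply Real.log_nonneg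
    rw [le_div_iff₀ hε0]
    linarith
  clear_value s L
  have hεL : ε * L ≤ 2 * s := by
    have h1 : (1 : ℝ) / ε = (1 / s) ^ 2 := by
      field_simp
      nlinarith
    have h2 : L = 2 * Real.log (1 / s) := by
      rw [hLdef, h1, Real.log_pow]
      push_cast; ring
    have h3 : Real.log (1 / s) ≤ 1 / s - 1 := Real.log_le_sub_one_of_pos (by positivity)
    have h4 : ε * L ≤ ε * (2 * (1 / s) - 2) := by
      apply mul_le_mul_of_nonneg_left _ hε0.le
      rw [h2]; linarith
    have h5 : ε * (2 * (1 / s) - 2) = 2 * s - 2 * ε := by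
      rw [← hss]; field_simp
    linarith
  have key : min (c1 + (1 + ε) * α * c2 + ε * C * L * OPT) c2
      ≤ (4 + (10 * C + 100) * s) * OPT := by
    rcases le_or_gt c2 ((4 + (10 * C + 100) * s) * OPT) with h2 | h2
    · exact le_trans (min_le_right _ _) h2
    · refine le_trans (min_le_left _ _) ?_
      have h1α : (0 : ℝ) < 1 - α := by linarith
      have hc2' : (1 + ε) * (α * c2) ≤ (1 + ε) * ((3 + ε) * OPT - (1 - α) * c1) :=
        mul_le_mul_of_nonneg_left (by linarith) (by linarith)
      have F1 : (1 - α) * ((1 + ε) * (α * c2))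
          ≤ (1 - α) * ((1 + ε) * ((3 + ε) * OPT - (1 - α) * c1)) :=
        mul_le_mul_of_nonneg_left hc2' h1α.le
      have F2 : (1 - α) * ((α * (1 + ε) - ε) * c1) ≤ (1 - α) * (α * c1) := by
        nlinarith [mul_nonneg (mul_nonneg hε0.le (sq_nonneg (1 - α))) hc10]
      have h6 : α * ((4 + (10 * C + 100) * s) * OPT) < α * c2 :=
        mul_lt_mul_of_pos_left h2 hα0
      have hb : (1 - α) * c1 ≤ ((3 + ε) - α * (4 + (10 * C + 100) * s)) * OPT := by
        nlinarith [hcon, h6]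
      have F3 : α * ((1 - α) * c1) ≤ α * (((3 + ε) - α * (4 + (10 * C + 100) * s)) * OPT) :=
        mul_le_mul_of_nonneg_left hb hα0.le
      have t1 : C * (ε * L) * OPT ≤ C * (2 * s) * OPT :=
        mul_le_mul_of_nonneg_right (mul_le_mul_of_nonneg_left hεL hC) hOPT.le
      have F4 : (1 - α) * (ε * C * L * OPT) ≤ (1 - α) * (2 * C * s * OPT) := by
        apply mul_le_mul_of_nonneg_left _ h1α.le
        linarith [t1]
      have p1 : α * ε ≤ s := by nlinarith [mul_nonneg hε0.le h1α.le]
      have p2 : (1 - α) * (4 * ε + ε * ε) ≤ 5 * s := by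
        nlinarith [mul_nonneg hα0.le (mul_nonneg hε0.le hε0.le),
          mul_nonneg hα0.le hε0.le, mul_nonneg hε0.le (by linarith : (0:ℝ) ≤ 1 - ε)]
      have p3 : 2 * C * s * (1 - α) ≤ 2 * C * s := by
        nlinarith [mul_nonneg (mul_nonneg hC hs0.le) hα0.le]
      have p4 : 0 ≤ C * (s * (α - 1/2) ^ 2) :=
        mul_nonneg hC (mul_nonneg hs0.le (sq_nonneg _))
      have p5 : 0 ≤ s * (α - 1/2) ^ 2 := mul_nonneg hs0.le (sq_nonneg _)
      have p6 : 0 ≤ (2 * α - 1) ^ 2 := sq_nonneg _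
      have p7 : 0 ≤ C * s := mul_nonneg hC hs0.le
      have P : α * (3 + ε - 4 * α - (10 * C + 100) * s * α)
          + (1 - α) * ((1 + ε) * (3 + ε)) + (1 - α) * (2 * C * s)
          ≤ (1 - α) * (4 + (10 * C + 100) * s) := by
        linarith [p1, p2, p3, p4, p5, p6, p7, hs0.le]
      have F5 := mul_le_mul_of_nonneg_right P hOPT.le
      rw [← mul_le_mul_iff_right₀ h1α]
      linarith [F1, F2, F3, F4, F5]
  have hextra : (4 + (10 * C + 100) * s) * OPT
      ≤ (4 + (10 * C + 100) * (s + ε * L)) * OPT := by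
    have q1 : 0 ≤ C * (ε * L) * OPT :=
      mul_nonneg (mul_nonneg hC (mul_nonneg hε0.le hL0)) hOPT.le
    have q2 : 0 ≤ ε * L * OPT := mul_nonneg (mul_nonneg hε0.le hL0) hOPT.le
    linarith [q1, q2]
  exact ⟨le_trans key hextra, key⟩
end

section
/- In the star-reduction procedure on a tree: if the iterated process of removing or contracting one side of an edge terminates, the resulting graph H is a star, every leaf of H has super-cardinality at most q, and if H has at least 2 leaves then every leaf of H is cost-effective (average cost at most the original ratio ρ). -/
/-- Invariants of the star-reduction procedure at termination. `H` is a tree with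
node costs `c` and super-cardinalities `s`; a vertex set `X` is cost-effective if
`c(X) ≤ ρ · s(X)`. Removing an edge `uv` splits the tree into the component `X` of
`u` and its complement (characterised by: `u ∈ X`, `v ∉ X`, and `uv` is the only
edge leaving `X`). At termination no step applies: every cost-effective side of an
edge is a single vertex (otherwise it would be contracted) of super-cardinality
less than `q` (otherwise the other side would be deleted). The whole vertex set is
cost-effective. Then `H` is a star with some center `ctr`, and if `H` has at least
two leaves, every leaf has super-cardinality at most `q` and is cost-effective. -/
theorem star_reduction_terminal {V : Type*} [Fintype V] [DecidableEq V] [Nonempty V]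
    (H : SimpleGraph V) (hH : H.IsTree)
    (c : V → ℝ) (s : V → ℕ) (ρ : ℝ) (q : ℕ)
    (hEffAll : ∑ v, c v ≤ ρ * ∑ v, (s v : ℝ))
    (hTerm : ∀ u v : V, ∀ X : Finset V, H.Adj u v → u ∈ X → v ∉ X →
      (∀ a ∈ X, ∀ b ∉ X, H.Adj a b → a = u ∧ b = v) →
      (∑ w ∈ X, c w ≤ ρ * ∑ w ∈ X, (s w : ℝ)) →
      X.card = 1 ∧ ∑ w ∈ X, s w < q) :
    ∃ ctr : V,
      (∀ u v : V, H.Adj u v → u = ctr ∨ v = ctr) ∧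
      (2 ≤ (Finset.univ.filter (· ≠ ctr)).card →
        ∀ v : V, v ≠ ctr → s v ≤ q ∧ c v ≤ ρ * s v) := by
  classical
  have keyA : ∀ u v : V, H.Adj u v →
      ((∀ w, H.Adj u w → w = v) ∧ s u < q ∧ c u ≤ ρ * s u) ∨
      ((∀ w, H.Adj v w → w = u) ∧ s v < q ∧ c v ≤ ρ * s v) := by
    intro u v huv
    set G := H \ SimpleGraph.fromEdgeSet {s(u, v)} with hG
    have hbridge : ¬ G.Reachable u v := by
      have hA := hH.IsAcyclic
      rw [SimpleGraph.isAcyclic_iff_forall_adj_isBridge] at hA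
      exact hA huv
    set X : Finset V := Finset.univ.filter (fun w => G.Reachable u w) with hX
    have huX : u ∈ X := Finset.mem_filter.mpr ⟨Finset.mem_univ u, SimpleGraph.Reachable.refl u⟩
    have hvX : v ∉ X := by simpa [hX] using hbridge
    have hGadj : ∀ a b, H.Adj a b → ¬ (a = u ∧ b = v) → ¬ (a = v ∧ b = u) → G.Adj a b := by
      intro a b hab h1 h2
      rw [hG, SimpleGraph.sdiff_adj]
      refine ⟨hab, ?_⟩
      rw [SimpleGraph.fromEdgeSet_adj]
      rintro ⟨he, -⟩
      rw [Set.mem_singleton_iff, Sym2.eq_iff] at he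
      tauto
    have hbd : ∀ a ∈ X, ∀ b ∉ X, H.Adj a b → a = u ∧ b = v := by
      intro a ha b hb hab
      by_contra hcon
      rcases em (a = v ∧ b = u) with h | h
      · exact hvX (h.1 ▸ ha)
      · have hGab : G.Adj a b := hGadj a b hab hcon h
        have hra : G.Reachable u a := by simpa [hX] using ha
        exact hb (by simp [hX, hra.trans hGab.reachable])
    have hbd' : ∀ a ∈ Xᶜ, ∀ b ∉ Xᶜ, H.Adj a b → a = v ∧ b = u := by
      intro a ha b hb hab
      rw [Finset.mem_compl] at ha
      rw [Finset.notMem_compl] at hb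
      by_contra hcon
      rcases em (a = u ∧ b = v) with h | h
      · exact ha (h.1 ▸ huX)
      · have hGab : G.Adj a b := hGadj a b hab h hcon
        have hrb : G.Reachable u b := by simpa [hX] using hb
        exact ha (by simp [hX, hrb.trans hGab.symm.reachable])
    have hcsplit : (∑ w ∈ X, c w) + (∑ w ∈ Xᶜ, c w) = ∑ v, c v :=
      Finset.sum_add_sum_compl X c
    have hssplit : (∑ w ∈ X, (s w : ℝ)) + (∑ w ∈ Xᶜ, (s w : ℝ)) = ∑ v, (s v : ℝ) :=
      Finset.sum_add_sum_compl X _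
    rcases le_or_gt (∑ w ∈ X, c w) (ρ * ∑ w ∈ X, (s w : ℝ)) with hce | hce
    · obtain ⟨hcard, hq⟩ := hTerm u v X huv huX hvX hbd hce
      have hXeq : X = {u} := by
        obtain ⟨a, ha⟩ := Finset.card_eq_one.mp hcard
        rw [ha] at huX ⊢
        rw [Finset.mem_singleton] at huX
        rw [huX]
      left
      refine ⟨?_, ?_, ?_⟩
      · intro w huw
        by_contra hwv
        have hGuw : G.Adj u w := hGadj u w huw (fun h => hwv h.2) (fun h => huv.ne h.1)
        have : w ∈ X := by simp [hX, hGuw.reachable]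
        rw [hXeq, Finset.mem_singleton] at this
        exact H.loopless.irrefl u (this ▸ huw)
      · simpa [hXeq] using hq
      · simpa [hXeq] using hce
    · have hce' : ∑ w ∈ Xᶜ, c w ≤ ρ * ∑ w ∈ Xᶜ, (s w : ℝ) := by
        have h1 : ρ * ∑ v, (s v : ℝ) =
            ρ * (∑ w ∈ X, (s w : ℝ)) + ρ * (∑ w ∈ Xᶜ, (s w : ℝ)) := by
          rw [← hssplit]; ring
        nlinarith [hEffAll, hcsplit, hce]
      have hvXc : v ∈ Xᶜ := Finset.mem_compl.mpr hvX
      have huXc : u ∉ Xᶜ := Finset.notMem_compl.mpr huX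
      obtain ⟨hcard, hq⟩ := hTerm v u Xᶜ huv.symm hvXc huXc hbd' hce'
      have hXeq : Xᶜ = {v} := by
        obtain ⟨a, ha⟩ := Finset.card_eq_one.mp hcard
        rw [ha] at hvXc ⊢
        rw [Finset.mem_singleton] at hvXc
        rw [hvXc]
      right
      refine ⟨?_, ?_, ?_⟩
      · intro w hvw
        by_contra hwu
        have hGvw : G.Adj v w := hGadj v w hvw (fun h => huv.ne h.1.symm) (fun h => hwu h.2)
        have : w ∈ Xᶜ := by
          rw [Finset.mem_compl]
          intro hwX
          have hrw : G.Reachable u w := by simpa [hX] using hwX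
          exact hbridge (hrw.trans hGvw.symm.reachable)
        rw [hXeq, Finset.mem_singleton] at this
        exact H.loopless.irrefl v (this ▸ hvw)
      · simpa [hXeq] using hq
      · simpa [hXeq] using hce'
  by_cases hE : ∃ a b : V, H.Adj a b
  · by_cases hc : ∃ x a b : V, H.Adj x a ∧ H.Adj x b ∧ a ≠ b
    · obtain ⟨ctr, a, b, hca, hcb, hab⟩ := hc
      have hctrNL : ¬ (∀ w, H.Adj ctr w → w = a) ∨ True := Or.inr trivial
      have hstar : ∀ u v : V, H.Adj u v → u = ctr ∨ v = ctr := by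
        intro u v huv
        by_contra hcon
        push_neg at hcon
        obtain ⟨hu, hv⟩ := hcon
        -- wlog-style: get that u is a leaf toward v or v leaf toward u
        have key := keyA u v huv
        -- helper: from "x leaf toward y" with Adj x y, x ≠ ctr, y ≠ ctr derive False
        have main : ∀ x y : V, H.Adj x y → x ≠ ctr → y ≠ ctr →
            (∀ w, H.Adj x w → w = y) → False := by
          intro x y hxy hx hy hleaf
          obtain ⟨w0⟩ := hH.isConnected.preconnected x ctr
          have p := w0.toPath
          obtain ⟨w, hw⟩ := p
          cases w with
          | nil => exact hx rfl
          | cons h1 q =>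
            rename_i c1
            have hc1 : c1 = y := hleaf c1 h1
            cases q with
            | nil => exact hy hc1.symm
            | cons h2 q2 =>
              rename_i d
              rcases keyA c1 d h2 with ⟨hl, -, -⟩ | ⟨hl, -, -⟩
              · have hx' : H.Adj c1 x := by rw [hc1]; exact hxy.symm
                have hxd : x = d := hl x hx'
                have hnd := hw.support_nodup
                rw [SimpleGraph.Walk.support_cons, SimpleGraph.Walk.support_cons] at hnd
                obtain ⟨hx1, -⟩ := List.nodup_cons.mp hnd
                exact hx1 (List.mem_cons_of_mem _ (hxd ▸ q2.start_mem_support))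
              · cases q2 with
                | nil =>
                  exact hab ((hl a hca).trans (hl b hcb).symm)
                | cons h3 q3 =>
                  rename_i e
                  have he : e = c1 := hl e h3
                  have hnd := hw.support_nodup
                  rw [SimpleGraph.Walk.support_cons, SimpleGraph.Walk.support_cons,
                    SimpleGraph.Walk.support_cons] at hnd
                  obtain ⟨-, hnd2⟩ := List.nodup_cons.mp hnd
                  obtain ⟨hc1mem, -⟩ := List.nodup_cons.mp hnd2
                  exact hc1mem (List.mem_cons_of_mem _ (he ▸ q3.start_mem_support))
        rcases key with ⟨hl, -, -⟩ | ⟨hl, -, -⟩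
        · exact main u v huv hu hv hl
        · exact main v u huv.symm hv hu hl
      refine ⟨ctr, hstar, ?_⟩
      intro _ v hv
      have hadj : H.Adj v ctr := by
        obtain ⟨w0⟩ := hH.isConnected.preconnected v ctr
        cases w0 with
        | nil => exact absurd rfl hv
        | cons h1 q =>
          rename_i c1
          rcases hstar v c1 h1 with h | h
          · exact absurd h hv
          · rwa [h] at h1
      rcases keyA v ctr hadj with ⟨-, hq, hce⟩ | ⟨hl, -, -⟩
      · exact ⟨hq.le, hce⟩
      · exact absurd ((hl a hca).trans (hl b hcb).symm) hab
    · push_neg at hc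
      obtain ⟨u₀, v₀, h₀⟩ := hE
      have hleaf : ∀ x a b : V, H.Adj x a → H.Adj x b → a = b := hc
      have hV : ∀ w : V, w = u₀ ∨ w = v₀ := by
        intro w
        obtain ⟨w0⟩ := hH.isConnected.preconnected u₀ w
        have p := w0.toPath
        obtain ⟨wk, hwk⟩ := p
        cases wk with
        | nil => exact Or.inl rfl
        | cons h1 q =>
          rename_i c1
          have hc1 : c1 = v₀ := hleaf u₀ c1 v₀ h1 h₀
          cases q with
          | nil => exact Or.inr hc1
          | cons h2 q2 =>
            rename_i d
            have hd : d = u₀ := by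
              have := hleaf c1 d u₀ h2 (by rw [hc1]; exact h₀.symm)
              exact this
            have hnd := hwk.support_nodup
            rw [SimpleGraph.Walk.support_cons, SimpleGraph.Walk.support_cons] at hnd
            obtain ⟨hu1, -⟩ := List.nodup_cons.mp hnd
            exact absurd (List.mem_cons_of_mem _ (hd ▸ q2.start_mem_support)) hu1
      refine ⟨v₀, ?_, ?_⟩
      · intro u v huv
        rcases hV u with h | h
        · rw [h] at huv
          exact Or.inr (hleaf u₀ v v₀ huv h₀)
        · exact Or.inl h
      · intro h2 v hv
        exfalso
        have hsub : (Finset.univ.filter (· ≠ v₀)) ⊆ {u₀} := by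
          intro w hw
          rw [Finset.mem_filter] at hw
          rcases hV w with h | h
          · simp [h]
          · exact absurd h hw.2
        have hle := Finset.card_le_card hsub
        rw [Finset.card_singleton] at hle
        omega
  · push_neg at hE
    obtain ⟨ctr⟩ := (inferInstance : Nonempty V)
    refine ⟨ctr, fun u v huv => absurd huv (hE u v), ?_⟩
    intro h2 v hv
    exfalso
    have hall : ∀ w : V, w = ctr := by
      intro w
      obtain ⟨w0⟩ := hH.isConnected.preconnected w ctr
      cases w0 with
      | nil => rfl
      | cons h1 q => exact absurd h1 (hE _ _)
    exact hv (hall v)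
end
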